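/- Let E be an R-module with symmetric bilinear form ⟨·,·⟩ extended to Λ•E as the Schouten-type bracket, and suppose C̃ : E^n → R satisfies C̃(...,e_i,e_{i+1},...) + C̃(...,e_{i+1},e_i,...) = σ(...,ê_i,ê_{i+1},...)(⟨e_i,e_{i+1}⟩) for a symbol σ : E^{n-2} → Der(R). Let C̄ and σ̄ be the respective extensions by derivation in each entry to arguments in Λ^{≥1}E. Then for all e, e' ∈ E and homogeneous P_1,...,P_{n-2} ∈ Λ^{≥1}E: C̄(P_1,...,P_i, e, e', P_{i+1},...,P_{n-2}) + C̄(P_1,...,P_i, e', e, P_{i+1},...,P_{n-2}) = σ̄(P_1,...,P_{n-2})(⟨e,e'⟩). -/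

import Mathlib

open ExteriorAlgebra

/-- The submodule of homogeneous `p`-vectors in the exterior algebra. -/
noncomputable def extGrade (R : Type*) [CommRing R] (E : Type*) [AddCommGroup E]
    [Module R E] (p : ℕ) : Submodule R (ExteriorAlgebra R E) :=
  LinearMap.range (ExteriorAlgebra.ι R : E →ₗ[R] ExteriorAlgebra R E) ^ p

/-- Insert two elements `x, y` at position `i` into an `m`-tuple. -/
def insert2 {A : Type*} {m : ℕ} (P : Fin m → A) (i : Fin (m + 1)) (x y : A) :
    Fin (m + 2) → A := fun j =>
  if hj : (j : ℕ) < (i : ℕ) then P ⟨j, by have := i.isLt; omega⟩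
  else if hj2 : (j : ℕ) = (i : ℕ) then x
  else if hj3 : (j : ℕ) = (i : ℕ) + 1 then y
  else P ⟨(j : ℕ) - 2, by have := j.isLt; have := i.isLt; omega⟩

namespace myaux
variable {A B : Type*} {m : ℕ}

def idx (i : Fin (m+1)) (j : Fin m) : Fin (m+2) :=
  if (j : ℕ) < (i : ℕ) then ⟨j, by have := j.isLt; have := i.isLt; omega⟩
  else ⟨(j:ℕ) + 2, by have := j.isLt; have := i.isLt; omega⟩

lemma idx_val (i : Fin (m+1)) (j : Fin m) :
    ((idx i j : Fin (m+2)) : ℕ) = if (j:ℕ) < (i:ℕ) then (j:ℕ) else (j:ℕ) + 2 := by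
  unfold idx; split_ifs <;> rfl

lemma insert2_apply (P : Fin m → A) (i : Fin (m+1)) (x y : A) (k : Fin (m+2))
    (hk : (k:ℕ) < (i:ℕ)) (j : Fin m) (hj : (j:ℕ) = (k:ℕ)) :
    insert2 P i x y k = P j := by
  unfold insert2; rw [dif_pos hk]; congr 1; exact Fin.ext hj.symm

lemma insert2_apply_x (P : Fin m → A) (i : Fin (m+1)) (x y : A) (k : Fin (m+2))
    (hk : (k:ℕ) = (i:ℕ)) : insert2 P i x y k = x := by
  unfold insert2; rw [dif_neg (by omega), dif_pos hk]

lemma insert2_apply_y (P : Fin m → A) (i : Fin (m+1)) (x y : A) (k : Fin (m+2))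
    (hk : (k:ℕ) = (i:ℕ) + 1) : insert2 P i x y k = y := by
  unfold insert2; rw [dif_neg (by omega), dif_neg (by omega), dif_pos hk]

lemma insert2_apply_hi (P : Fin m → A) (i : Fin (m+1)) (x y : A) (k : Fin (m+2))
    (hk : (i:ℕ) + 1 < (k:ℕ)) (j : Fin m) (hj : (j:ℕ) + 2 = (k:ℕ)) :
    insert2 P i x y k = P j := by
  unfold insert2
  rw [dif_neg (by omega), dif_neg (by omega), dif_neg (by omega)]
  congr 1; exact Fin.ext (show (k:ℕ) - 2 = (j:ℕ) by omega)

lemma insert2_idx (P : Fin m → A) (i : Fin (m+1)) (x y : A) (j : Fin m) :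
    insert2 P i x y (idx i j) = P j := by
  have hv := idx_val i j
  by_cases h : (j:ℕ) < (i:ℕ)
  · rw [if_pos h] at hv; exact insert2_apply P i x y _ (by omega) j (by omega)
  · rw [if_neg h] at hv; exact insert2_apply_hi P i x y _ (by omega) j (by omega)

lemma insert2_castSucc (P : Fin m → A) (i : Fin (m+1)) (x y : A) :
    insert2 P i x y i.castSucc = x :=
  insert2_apply_x P i x y _ (by simp)

lemma insert2_succ (P : Fin m → A) (i : Fin (m+1)) (x y : A) :
    insert2 P i x y i.succ = y :=
  insert2_apply_y P i x y _ (by simp)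

lemma insert2_comp (f : A → B) (P : Fin m → A) (i : Fin (m+1)) (x y : A) :
    insert2 (fun j => f (P j)) i (f x) (f y) = fun k => f (insert2 P i x y k) := by
  funext k; unfold insert2; split_ifs <;> rfl

lemma insert2_update [DecidableEq A] (P : Fin m → A) (i : Fin (m+1)) (x a b : A) (j : Fin m) :
    insert2 (Function.update P j x) i a b
      = Function.update (insert2 P i a b) (idx i j) x := by
  funext k
  have hv := idx_val i j
  rcases eq_or_ne k (idx i j) with rfl | hne
  · rw [Function.update_self]
    by_cases h : (j:ℕ) < (i:ℕ)
    · rw [if_pos h] at hv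
      rw [insert2_apply _ i a b _ (by omega) j (by omega), Function.update_self]
    · rw [if_neg h] at hv
      rw [insert2_apply_hi _ i a b _ (by omega) j (by omega), Function.update_self]
  · rw [Function.update_of_ne hne]
    have hkv : (k:ℕ) ≠ (idx i j : Fin (m+2)) := fun h => hne (Fin.ext h)
    by_cases h1 : (k:ℕ) < (i:ℕ)
    · have hj' : ((⟨(k:ℕ), by have := k.isLt; have := i.isLt; omega⟩ : Fin m) : ℕ) = (k:ℕ) := rfl
      rw [insert2_apply _ i a b k h1 _ hj', insert2_apply P i a b k h1 _ hj']
      rw [Function.update_of_ne]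
      intro hcon
      apply hkv
      rw [hv]
      have h5 : (k:ℕ) = (j:ℕ) := congrArg Fin.val hcon
      split_ifs with hcase <;> omega
    · by_cases h2 : (k:ℕ) = (i:ℕ)
      · rw [insert2_apply_x _ i a b k h2, insert2_apply_x P i a b k h2]
      · by_cases h3 : (k:ℕ) = (i:ℕ) + 1
        · rw [insert2_apply_y _ i a b k h3, insert2_apply_y P i a b k h3]
        · have hk4 : (i:ℕ) + 1 < (k:ℕ) := by omega
          have hj' : ((⟨(k:ℕ) - 2, by have := k.isLt; omega⟩ : Fin m) : ℕ) + 2 = (k:ℕ) := by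
            show ((k:ℕ) - 2) + 2 = (k:ℕ); omega
          rw [insert2_apply_hi _ i a b k hk4 _ hj', insert2_apply_hi P i a b k hk4 _ hj']
          rw [Function.update_of_ne]
          intro hcon
          apply hkv
          rw [hv]
          have h5 : (k:ℕ) - 2 = (j:ℕ) := congrArg Fin.val hcon
          split_ifs with hcase <;> omega

/-- swapping the two inserted entries -/
lemma insert2_swap (P : Fin m → A) (i : Fin (m+1)) (x y : A) :
    (fun k => insert2 P i x y (Equiv.swap i.castSucc i.succ k)) = insert2 P i y x := by
  funext k
  rcases eq_or_ne k i.castSucc with rfl | h1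
  · rw [Equiv.swap_apply_left, insert2_succ, insert2_castSucc]
  · rcases eq_or_ne k i.succ with rfl | h2
    · rw [Equiv.swap_apply_right, insert2_castSucc, insert2_succ]
    · rw [Equiv.swap_apply_of_ne_of_ne h1 h2]
      have hc : (k:ℕ) ≠ (i:ℕ) := fun h => h1 (Fin.ext (by simpa using h))
      have hs : (k:ℕ) ≠ (i:ℕ)+1 := fun h => h2 (Fin.ext (by simpa using h))
      by_cases h : (k:ℕ) < (i:ℕ)
      · rw [insert2_apply P i x y k h ⟨k, by have := k.isLt; have := i.isLt; omega⟩ rfl,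
          insert2_apply P i y x k h ⟨k, by have := k.isLt; have := i.isLt; omega⟩ rfl]
      · have h4 : (i:ℕ)+1 < (k:ℕ) := by omega
        rw [insert2_apply_hi P i x y k h4 ⟨k-2, by have := k.isLt; omega⟩ (by simp; omega),
          insert2_apply_hi P i y x k h4 ⟨k-2, by have := k.isLt; omega⟩ (by simp; omega)]

/-- a paired relation lemma -/
lemma insert2_rel {C : Type*} (Rel : A → C → Prop) (p : Fin m → A) (P : Fin m → C)
    (i : Fin (m+1)) (pa pb : A) (a b : C)
    (hP : ∀ j, Rel (p j) (P j)) (ha : Rel pa a) (hb : Rel pb b) :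
    ∀ k, Rel (insert2 p i pa pb k) (insert2 P i a b k) := by
  intro k; unfold insert2
  split_ifs
  · exact hP _
  · exact ha
  · exact hb
  · exact hP _



lemma idx_strictMono (i : Fin (m+1)) : StrictMono (idx i) := by
  intro a b hab
  have ha := idx_val i a; have hb := idx_val i b
  rw [Fin.lt_def]
  rw [Fin.lt_def] at hab
  split_ifs at ha hb <;> omega

lemma idx_inj (i : Fin (m+1)) : Function.Injective (idx i) :=
  (idx_strictMono i).injective

lemma Ioi_idx (i : Fin (m+1)) (j0 : Fin m) :
    Finset.Ioi (idx i j0)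
      = ((Finset.Ioi j0).map ⟨idx i, idx_inj i⟩)
        ∪ (if (j0:ℕ) < (i:ℕ) then ({i.castSucc, i.succ} : Finset (Fin (m+2))) else ∅) := by
  ext k
  simp only [Finset.mem_Ioi, Finset.mem_union, Finset.mem_map, Function.Embedding.coeFn_mk]
  have hv0 := idx_val i j0
  constructor
  · intro hk
    rw [Fin.lt_def, hv0] at hk
    by_cases h1 : (k:ℕ) < (i:ℕ)
    · left
      have hkm : (k:ℕ) < m := by have := i.isLt; omega
      refine ⟨⟨(k:ℕ), hkm⟩, ?_, ?_⟩
      · rw [Fin.lt_def]; show (j0:ℕ) < (k:ℕ); split_ifs at hk <;> omega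
      · apply Fin.ext; rw [idx_val]
        show (if (k:ℕ) < (i:ℕ) then (k:ℕ) else (k:ℕ)+2) = (k:ℕ)
        rw [if_pos h1]
    · by_cases h2 : (k:ℕ) = (i:ℕ)
      · right
        have hj0 : (j0:ℕ) < (i:ℕ) := by split_ifs at hk <;> omega
        rw [if_pos hj0]
        simp only [Finset.mem_insert, Finset.mem_singleton]
        left; exact Fin.ext (by simpa using h2)
      · by_cases h3 : (k:ℕ) = (i:ℕ)+1
        · right
          have hj0 : (j0:ℕ) < (i:ℕ) := by split_ifs at hk <;> omega
          rw [if_pos hj0]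
          simp only [Finset.mem_insert, Finset.mem_singleton]
          right; exact Fin.ext (by simpa using h3)
        · left
          have hkm : (k:ℕ) - 2 < m := by have := k.isLt; omega
          refine ⟨⟨(k:ℕ) - 2, hkm⟩, ?_, ?_⟩
          · rw [Fin.lt_def]; show (j0:ℕ) < (k:ℕ) - 2; split_ifs at hk <;> omega
          · apply Fin.ext; rw [idx_val]
            show (if (k:ℕ)-2 < (i:ℕ) then (k:ℕ)-2 else ((k:ℕ)-2)+2) = (k:ℕ)
            rw [if_neg (by omega)]; omega
  · intro hk
    rcases hk with ⟨j, hj, rfl⟩ | hk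
    · exact idx_strictMono i hj
    · split_ifs at hk with hj0
      · simp only [Finset.mem_insert, Finset.mem_singleton] at hk
        rw [Fin.lt_def, hv0, if_pos hj0]
        rcases hk with rfl | rfl
        · simp; omega
        · simp; omega
      · simp at hk

lemma sum_Ioi_insert2 (p : Fin m → ℕ) (i : Fin (m+1)) (j0 : Fin m) :
    ∑ k ∈ Finset.Ioi (idx i j0), insert2 p i 1 1 k
      = (∑ j ∈ Finset.Ioi j0, p j) + (if (j0:ℕ) < (i:ℕ) then 2 else 0) := by
  rw [Ioi_idx, Finset.sum_union, Finset.sum_map]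
  · congr 1
    · apply Finset.sum_congr rfl
      intro j _
      exact insert2_idx p i 1 1 j
    · split_ifs with h
      · rw [Finset.sum_pair (by
          intro hcon
          have : (i:ℕ) = (i:ℕ)+1 := by simpa [Fin.ext_iff] using hcon
          omega)]
        rw [insert2_castSucc, insert2_succ]
      · simp
  · rw [Finset.disjoint_left]
    intro k hk1 hk2
    simp only [Finset.mem_map, Function.Embedding.coeFn_mk] at hk1
    obtain ⟨j, _, rfl⟩ := hk1
    have hv := idx_val i j
    split_ifs at hk2 with h
    · simp only [Finset.mem_insert, Finset.mem_singleton, Fin.ext_iff] at hk2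
      simp only [Fin.coe_castSucc, Fin.val_succ] at hk2
      rw [hv] at hk2
      split_ifs at hk2 <;> omega
    · simp at hk2

lemma sum_Ici_insert2 (p : Fin m → ℕ) (i : Fin (m+1)) (j0 : Fin m) :
    ∑ k ∈ Finset.Ici (idx i j0), insert2 p i 1 1 k
      = (∑ j ∈ Finset.Ici j0, p j) + (if (j0:ℕ) < (i:ℕ) then 2 else 0) := by
  rw [Finset.Ici_eq_cons_Ioi, Finset.sum_cons, Finset.Ici_eq_cons_Ioi, Finset.sum_cons,
    sum_Ioi_insert2, insert2_idx]
  omega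

lemma neg_one_pow_if (a S : ℕ) (c : ℕ) (hc : c = 0 ∨ c = 2) :
    ((-1 : ℤ))^(a * (S + c)) = (-1 : ℤ)^(a * S) := by
  rcases hc with rfl | rfl
  · rw [Nat.add_zero]
  · rw [Nat.mul_add, pow_add]
    have : ((-1:ℤ))^(a*2) = 1 := by rw [mul_comm, pow_mul]; norm_num
    rw [this, mul_one]

lemma neg_one_pow_if' (S : ℕ) (c : ℕ) (hc : c = 0 ∨ c = 2) :
    ((-1 : ℤ))^(S + c) = (-1 : ℤ)^S := by
  rcases hc with rfl | rfl
  · rw [Nat.add_zero]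
  · rw [pow_add]; norm_num

lemma insert2_restrict (es : Fin m → A) (i : Fin (m+1)) (x y : A) :
    (fun j : Fin m => if (j:ℕ) < (i:ℕ) then
        insert2 es i x y ⟨(j:ℕ), by have := j.isLt; have := i.isLt; omega⟩
      else insert2 es i x y ⟨(j:ℕ)+2, by have := j.isLt; have := i.isLt; omega⟩) = es := by
  funext j
  split_ifs with h
  · exact insert2_apply es i x y _ h j rfl
  · exact insert2_apply_hi es i x y _ (show (i:ℕ)+1 < (j:ℕ)+2 by omega) j rfl

end myaux

/-- the extensions by derivation `C̄`, `σ̄` of a pre-multi-Courant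
structure `C̃` with symbol `σ` satisfy
`C̄(P₁,…,Pᵢ,e,e',Pᵢ₊₁,…,P_{n-2}) + C̄(P₁,…,Pᵢ,e',e,Pᵢ₊₁,…,P_{n-2}) = σ̄(P₁,…,P_{n-2})(⟨e,e'⟩)`. -/
theorem extension_by_derivation_higher_courant
    {R : Type*} [CommRing R] {E : Type*} [AddCommGroup E] [Module R E]
    (bil : E →ₗ[R] E →ₗ[R] R) (hsymm : ∀ e e', bil e e' = bil e' e)
    (m : ℕ) (Ct : (Fin (m + 2) → E) → R) (σ : (Fin m → E) → R → R)
    -- the pre-multi-Courant condition on `C̃` with symbol `σ`: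
    (hsrc : ∀ (es : Fin (m + 2) → E) (k : Fin (m + 1)),
      Ct es + Ct (fun x => es (Equiv.swap k.castSucc k.succ x))
        = σ (fun j : Fin m =>
              if (j : ℕ) < (k : ℕ) then es ⟨j, by have := j.isLt; omega⟩
              else es ⟨(j : ℕ) + 2, by have := j.isLt; omega⟩)
            (bil (es k.castSucc) (es k.succ)))
    (Cbar : (Fin (m + 2) → ExteriorAlgebra R E) → ExteriorAlgebra R E)
    (σbar : (Fin m → ExteriorAlgebra R E) → R → ExteriorAlgebra R E)
    -- `C̄` is multilinear and agrees with `C̃` on sections: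
    (hCml : ∀ (i : Fin (m + 2)) (v : Fin (m + 2) → ExteriorAlgebra R E) (a : R)
        (x y : ExteriorAlgebra R E),
      Cbar (Function.update v i (a • x + y))
        = a • Cbar (Function.update v i x) + Cbar (Function.update v i y))
    (hCagree : ∀ e : Fin (m + 2) → E,
      Cbar (fun j => ι R (e j)) = algebraMap R (ExteriorAlgebra R E) (Ct e))
    -- the derivation property of `C̄` in each entry:
    (hCder : ∀ (i : Fin (m + 2)) (p : Fin (m + 2) → ℕ), (∀ j, 1 ≤ p j) →
      ∀ (P : Fin (m + 2) → ExteriorAlgebra R E),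
        (∀ j, P j ∈ extGrade R E (p j)) → ∀ e : E,
        Cbar (Function.update P i (P i * ι R e))
          = ((-1 : ℤ) ^ (p i * ∑ j ∈ Finset.Ioi i, p j)) •
              (P i * Cbar (Function.update P i (ι R e)))
            + ((-1 : ℤ) ^ (∑ j ∈ Finset.Ici i, p j)) • (ι R e * Cbar P))
    -- `σ̄` is multilinear and agrees with `σ` on sections:
    (hσml : ∀ (i : Fin m) (v : Fin m → ExteriorAlgebra R E) (a : R)
        (x y : ExteriorAlgebra R E) (f : R),
      σbar (Function.update v i (a • x + y)) f
        = a • σbar (Function.update v i x) f + σbar (Function.update v i y) f)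
    (hσagree : ∀ (e : Fin m → E) (f : R),
      σbar (fun j => ι R (e j)) f = algebraMap R (ExteriorAlgebra R E) (σ e f))
    -- the derivation property of `σ̄` in each entry:
    (hσder : ∀ (i : Fin m) (p : Fin m → ℕ), (∀ j, 1 ≤ p j) →
      ∀ (P : Fin m → ExteriorAlgebra R E),
        (∀ j, P j ∈ extGrade R E (p j)) → ∀ (e : E) (f : R),
        σbar (Function.update P i (P i * ι R e)) f
          = ((-1 : ℤ) ^ (p i * ∑ j ∈ Finset.Ioi i, p j)) •
              (P i * σbar (Function.update P i (ι R e)) f)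
            + ((-1 : ℤ) ^ (∑ j ∈ Finset.Ici i, p j)) • (ι R e * σbar P f)) :
    ∀ (i : Fin (m + 1)) (p : Fin m → ℕ), (∀ j, 1 ≤ p j) →
      ∀ (P : Fin m → ExteriorAlgebra R E), (∀ j, P j ∈ extGrade R E (p j)) →
      ∀ e e' : E,
        Cbar (insert2 P i (ι R e) (ι R e')) + Cbar (insert2 P i (ι R e') (ι R e))
          = σbar P (bil e e') := by
  classical
  have hadd_C : ∀ (K : Fin (m+2)) (v : Fin (m+2) → ExteriorAlgebra R E)
      (x y : ExteriorAlgebra R E),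
      Cbar (Function.update v K (x+y))
        = Cbar (Function.update v K x) + Cbar (Function.update v K y) := by
    intro K v x y
    have h := hCml K v 1 x y
    rwa [one_smul, one_smul] at h
  have hadd_σ : ∀ (K : Fin m) (v : Fin m → ExteriorAlgebra R E)
      (x y : ExteriorAlgebra R E) (f : R),
      σbar (Function.update v K (x+y)) f
        = σbar (Function.update v K x) f + σbar (Function.update v K y) f := by
    intro K v x y f
    have h := hσml K v 1 x y f
    rwa [one_smul, one_smul] at h
  suffices H : ∀ (N : ℕ) (p : Fin m → ℕ), (∀ j, 1 ≤ p j) → ∑ j, p j = N →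
      ∀ (i : Fin (m+1)) (P : Fin m → ExteriorAlgebra R E),
        (∀ j, P j ∈ extGrade R E (p j)) →
      ∀ e e' : E,
        Cbar (insert2 P i (ι R e) (ι R e')) + Cbar (insert2 P i (ι R e') (ι R e))
          = σbar P (bil e e') by
    intro i p hp P hP e e'
    exact H (∑ j, p j) p hp rfl i P hP e e'
  intro N
  induction N using Nat.strong_induction_on with
  | _ N IH =>
  intro p hp hsum i P hP e e'
  by_cases hex : ∃ j0, 2 ≤ p j0
  · -- inductive step
    obtain ⟨j0, hq⟩ := hex
    have hP0 : P j0 ∈ LinearMap.range (ExteriorAlgebra.ι R : E →ₗ[R] ExteriorAlgebra R E)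
        ^ (p j0 - 1) * LinearMap.range (ExteriorAlgebra.ι R : E →ₗ[R] ExteriorAlgebra R E) := by
      have h1 : p j0 = (p j0 - 1) + 1 := by omega
      have h2 := hP j0
      unfold extGrade at h2
      rw [h1, pow_succ] at h2
      exact h2
    have main :
        Cbar (insert2 (Function.update P j0 (P j0)) i (ι R e) (ι R e'))
          + Cbar (insert2 (Function.update P j0 (P j0)) i (ι R e') (ι R e))
          = σbar (Function.update P j0 (P j0)) (bil e e') := by
      refine Submodule.mul_induction_on hP0 ?_ ?_
      · intro s hs t ht
        obtain ⟨e'', rfl⟩ := ht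
        -- abbreviations
        have hp' : ∀ j, 1 ≤ Function.update p j0 (p j0 - 1) j := by
          intro j
          rw [Function.update_apply]
          split_ifs
          · omega
          · exact hp j
        have hP' : ∀ j, Function.update P j0 s j
            ∈ extGrade R E (Function.update p j0 (p j0 - 1) j) := by
          intro j
          rw [Function.update_apply, Function.update_apply]
          split_ifs with h
          · exact hs
          · exact hP j
        have hp'' : ∀ j, 1 ≤ Function.update p j0 1 j := by
          intro j
          rw [Function.update_apply]
          split_ifs
          · omega
          · exact hp j
        have hι : ∀ v : E, ι R v ∈ extGrade R E 1 := by
          intro v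
          unfold extGrade
          rw [pow_one]
          exact LinearMap.mem_range_self _ _
        have hP'' : ∀ j, Function.update P j0 (ι R e'') j
            ∈ extGrade R E (Function.update p j0 1 j) := by
          intro j
          rw [Function.update_apply, Function.update_apply]
          split_ifs with h
          · exact hι e''
          · exact hP j
        -- sum bounds
        have hsumaux := Finset.sum_update_of_mem (Finset.mem_univ j0) p (p j0)
        rw [Function.update_eq_self] at hsumaux
        have hsum' : ∑ j, Function.update p j0 (p j0 - 1) j < N := by
          have h1 := Finset.sum_update_of_mem (Finset.mem_univ j0) p (p j0 - 1)
          omega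
        have hsum'' : ∑ j, Function.update p j0 1 j < N := by
          have h1 := Finset.sum_update_of_mem (Finset.mem_univ j0) p 1
          omega
        -- induction hypotheses
        have IH1 := IH _ hsum'' (Function.update p j0 1) hp'' rfl i
          (Function.update P j0 (ι R e'')) hP'' e e'
        have IH2 := IH _ hsum' (Function.update p j0 (p j0 - 1)) hp' rfl i
          (Function.update P j0 s) hP' e e'
        -- degree membership for the inserted tuples
        have hpe : ∀ k, 1 ≤ insert2 (Function.update p j0 (p j0 - 1)) i 1 1 k :=
          myaux.insert2_rel (fun a (_ : ℕ) => 1 ≤ a) (Function.update p j0 (p j0 - 1))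
            (Function.update p j0 (p j0 - 1)) i 1 1 1 1 hp' le_rfl le_rfl
        have hV : ∀ k, insert2 (Function.update P j0 s) i (ι R e) (ι R e') k
            ∈ extGrade R E (insert2 (Function.update p j0 (p j0 - 1)) i 1 1 k) :=
          myaux.insert2_rel (fun q x => x ∈ extGrade R E q) _ _ i 1 1 _ _ hP' (hι e) (hι e')
        have hW : ∀ k, insert2 (Function.update P j0 s) i (ι R e') (ι R e) k
            ∈ extGrade R E (insert2 (Function.update p j0 (p j0 - 1)) i 1 1 k) :=
          myaux.insert2_rel (fun q x => x ∈ extGrade R E q) _ _ i 1 1 _ _ hP' (hι e') (hι e)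
        -- derivation expansions for Cbar
        have hder1 := hCder (myaux.idx i j0) _ hpe _ hV e''
        have hder2 := hCder (myaux.idx i j0) _ hpe _ hW e''
        have hVK : insert2 (Function.update P j0 s) i (ι R e) (ι R e') (myaux.idx i j0) = s := by
          rw [myaux.insert2_update, Function.update_self]
        have hWK : insert2 (Function.update P j0 s) i (ι R e') (ι R e) (myaux.idx i j0) = s := by
          rw [myaux.insert2_update, Function.update_self]
        rw [hVK] at hder1
        rw [hWK] at hder2
        have hVup : Function.update (insert2 (Function.update P j0 s) i (ι R e) (ι R e'))
            (myaux.idx i j0) (s * ι R e'')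
            = insert2 (Function.update P j0 (s * ι R e'')) i (ι R e) (ι R e') := by
          rw [myaux.insert2_update, myaux.insert2_update, Function.update_idem]
        have hWup : Function.update (insert2 (Function.update P j0 s) i (ι R e') (ι R e))
            (myaux.idx i j0) (s * ι R e'')
            = insert2 (Function.update P j0 (s * ι R e'')) i (ι R e') (ι R e) := by
          rw [myaux.insert2_update, myaux.insert2_update, Function.update_idem]
        have hVup2 : Function.update (insert2 (Function.update P j0 s) i (ι R e) (ι R e'))
            (myaux.idx i j0) (ι R e'')
            = insert2 (Function.update P j0 (ι R e'')) i (ι R e) (ι R e') := by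
          rw [myaux.insert2_update, myaux.insert2_update, Function.update_idem]
        have hWup2 : Function.update (insert2 (Function.update P j0 s) i (ι R e') (ι R e))
            (myaux.idx i j0) (ι R e'')
            = insert2 (Function.update P j0 (ι R e'')) i (ι R e') (ι R e) := by
          rw [myaux.insert2_update, myaux.insert2_update, Function.update_idem]
        rw [hVup, hVup2] at hder1
        rw [hWup, hWup2] at hder2
        -- sign identities
        have hpeK : insert2 (Function.update p j0 (p j0 - 1)) i 1 1 (myaux.idx i j0)
            = Function.update p j0 (p j0 - 1) j0 := myaux.insert2_idx _ i 1 1 j0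
        have hsign1 : ((-1 : ℤ)) ^ (insert2 (Function.update p j0 (p j0 - 1)) i 1 1 (myaux.idx i j0)
              * ∑ k ∈ Finset.Ioi (myaux.idx i j0), insert2 (Function.update p j0 (p j0 - 1)) i 1 1 k)
            = (-1 : ℤ) ^ (Function.update p j0 (p j0 - 1) j0
              * ∑ j ∈ Finset.Ioi j0, Function.update p j0 (p j0 - 1) j) := by
          rw [hpeK, myaux.sum_Ioi_insert2]
          exact myaux.neg_one_pow_if _ _ _ (by split_ifs <;> simp)
        have hsign2 : ((-1 : ℤ)) ^ (∑ k ∈ Finset.Ici (myaux.idx i j0),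
              insert2 (Function.update p j0 (p j0 - 1)) i 1 1 k)
            = (-1 : ℤ) ^ (∑ j ∈ Finset.Ici j0, Function.update p j0 (p j0 - 1) j) := by
          rw [myaux.sum_Ici_insert2]
          exact myaux.neg_one_pow_if' _ _ (by split_ifs <;> simp)
        rw [hsign1, hsign2] at hder1 hder2
        -- σ derivation expansion
        have hderσ := hσder j0 (Function.update p j0 (p j0 - 1)) hp'
          (Function.update P j0 s) hP' e'' (bil e e')
        rw [Function.update_self, Function.update_idem, Function.update_idem] at hderσ
        -- assemble
        rw [hder1, hder2, hderσ, ← IH1, ← IH2]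
        rw [mul_add, mul_add, smul_add, smul_add, add_add_add_comm]
      · intro x y hx hy
        simp only [myaux.insert2_update] at hx hy ⊢
        rw [hadd_C, hadd_C, hadd_σ, add_add_add_comm, hx, hy]
    rwa [Function.update_eq_self] at main
  · -- base case: all degrees equal 1
    have hp1 : ∀ j, p j = 1 := by
      intro j
      have h1 := hp j
      have h2 := not_exists.1 hex j
      omega
    have hPj : ∀ j, ∃ v : E, ι R v = P j := by
      intro j
      have h := hP j
      rw [hp1 j] at h
      unfold extGrade at h
      rw [pow_one] at h
      exact h
    choose es hes using hPj
    have hPes : P = fun j => ι R (es j) := funext fun j => (hes j).symm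
    rw [hPes]
    rw [myaux.insert2_comp (⇑(ExteriorAlgebra.ι R : E →ₗ[R] ExteriorAlgebra R E)) es i e e',
      myaux.insert2_comp (⇑(ExteriorAlgebra.ι R : E →ₗ[R] ExteriorAlgebra R E)) es i e' e,
      hCagree (insert2 es i e e'), hCagree (insert2 es i e' e),
      hσagree es (bil e e'), ← map_add]
    congr 1
    have hs := hsrc (insert2 es i e e') i
    rw [myaux.insert2_swap es i e e', myaux.insert2_castSucc, myaux.insert2_succ,
      myaux.insert2_restrict es i e e'] at hs
    exact hs
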